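/- Let v, v_* ∈ ℝ³ with v ≠ v_*, let σ ∈ 𝕊² be a unit vector, let κ, ι ∈ [0,1], and set a = κ + ι and t = ((v − v_*)/‖v − v_*‖)·σ. Then ‖v(κ) − v_*(ι)‖² = ‖v − v_*‖² · ( (1 + t)/2 + (1 − a)² (1 − t)/2 ). In particular, if t ≥ 0 then (1/2)‖v − v_*‖² ≤ ‖v(κ) − v_*(ι)‖² ≤ ‖v − v_*‖²; equivalently, the factor ψ_a(θ) = (cos²(θ/2) + (1 − a)² sin²(θ/2))^{−1/2} satisfies 1 ≤ ψ_a(θ) ≤ √2 for all a ∈ [0, 2] and θ ∈ [0, π/2]. -/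

import Mathlib

open MeasureTheory
open scoped ENNReal

noncomputable section

/-- The velocity space `ℝ³`. -/
abbrev R3 : Type := EuclideanSpace ℝ (Fin 3)

lemma bound_aux (N t q : ℝ) (hN : 0 < N) (ht0 : 0 ≤ t) (ht1 : t ≤ 1)
    (hq0 : 0 ≤ q) (hq1 : q ≤ 1) :
    (2⁻¹ : ℝ) * N ≤ N * ((1 + t) / 2 + q * ((1 - t) / 2)) ∧
    N * ((1 + t) / 2 + q * ((1 - t) / 2)) ≤ N := by
  have h1t : (0:ℝ) ≤ 1 - t := by linarith
  have hA : q * (1 - t) ≤ 1 - t := by nlinarith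
  constructor
  · nlinarith [mul_nonneg hN.le ht0, mul_nonneg (mul_nonneg hN.le hq0) h1t]
  · nlinarith [mul_le_mul_of_nonneg_left hA hN.le]

lemma psi_bounds (a' θ : ℝ) (ha : a' ∈ Set.Icc (0:ℝ) 2)
    (hθ : θ ∈ Set.Icc (0:ℝ) (Real.pi / 2)) :
    1 ≤ (Real.cos (θ / 2) ^ 2 + (1 - a') ^ 2 * Real.sin (θ / 2) ^ 2) ^ (-(2⁻¹ : ℝ)) ∧
    (Real.cos (θ / 2) ^ 2 + (1 - a') ^ 2 * Real.sin (θ / 2) ^ 2) ^ (-(2⁻¹ : ℝ))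
      ≤ Real.sqrt 2 := by
  obtain ⟨ha0, ha2⟩ := ha
  obtain ⟨hθ0, hθπ⟩ := hθ
  set c := Real.cos (θ / 2) with hc
  set s := Real.sin (θ / 2) with hs
  have hcs : c ^ 2 + s ^ 2 = 1 := by
    rw [hc, hs]; exact Real.cos_sq_add_sin_sq _
  have hclb : Real.sqrt 2 / 2 ≤ c := by
    have h4 : Real.cos (Real.pi / 4) = Real.sqrt 2 / 2 := Real.cos_pi_div_four
    rw [hc, ← h4]
    apply Real.cos_le_cos_of_nonneg_of_le_pi
    · positivity
    · linarith [Real.pi_pos]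
    · linarith
  have hc2 : 1 / 2 ≤ c ^ 2 := by
    nlinarith [Real.sq_sqrt (by norm_num : (2:ℝ) ≥ 0), Real.sqrt_nonneg 2]
  have haa : (1 - a') ^ 2 ≤ 1 := by nlinarith
  set x := c ^ 2 + (1 - a') ^ 2 * s ^ 2 with hx
  have hxpos : 0 < x := by nlinarith [sq_nonneg s, sq_nonneg (1 - a')]
  have hxlb : 1 / 2 ≤ x := by nlinarith [sq_nonneg s, sq_nonneg (1 - a')]
  have hxub : x ≤ 1 := by nlinarith [sq_nonneg s]
  have hrw : x ^ (-(2⁻¹ : ℝ)) = (Real.sqrt x)⁻¹ := by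
    rw [Real.rpow_neg hxpos.le, Real.sqrt_eq_rpow]
    norm_num
  rw [hrw]
  have hsx : 0 < Real.sqrt x := Real.sqrt_pos.mpr hxpos
  constructor
  · rw [le_inv_comm₀ one_pos hsx, inv_one]
    exact Real.sqrt_le_one.mpr hxub
  · have h1 : Real.sqrt (1 / 2) ≤ Real.sqrt x := Real.sqrt_le_sqrt hxlb
    have h2 : (Real.sqrt (1 / 2))⁻¹ = Real.sqrt 2 := by
      rw [one_div, Real.sqrt_inv, inv_inv]
    calc (Real.sqrt x)⁻¹ ≤ (Real.sqrt (1 / 2))⁻¹ := by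
          apply inv_anti₀ _ h1
          positivity
      _ = Real.sqrt 2 := h2

/-- For `v ≠ v_*`, a unit vector `σ`, `κ, ι ∈ [0,1]`, `a = κ + ι` and
`t = ((v − v_*)/‖v − v_*‖)·σ`, the interpolated velocities
`v(κ) = κv' + (1 − κ)v`, `v_*(ι) = ιv_*' + (1 − ι)v_*` satisfy
`‖v(κ) − v_*(ι)‖² = ‖v − v_*‖²((1 + t)/2 + (1 − a)²(1 − t)/2)`;
in particular `½‖v − v_*‖² ≤ ‖v(κ) − v_*(ι)‖² ≤ ‖v − v_*‖²` when `t ≥ 0`, and equivalently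
`1 ≤ ψ_a(θ) = (cos²(θ/2) + (1 − a)² sin²(θ/2))^{−1/2} ≤ √2` for `a ∈ [0,2]`, `θ ∈ [0, π/2]`. -/
theorem statement1 (v vs σ : R3) (hne : v ≠ vs) (hσ : ‖σ‖ = 1)
    (κ ι : ℝ) (hκ : κ ∈ Set.Icc (0:ℝ) 1) (hι : ι ∈ Set.Icc (0:ℝ) 1) :
    let v' : R3 := (2⁻¹ : ℝ) • (v + vs) + (‖v - vs‖ / 2) • σ
    let vs' : R3 := (2⁻¹ : ℝ) • (v + vs) - (‖v - vs‖ / 2) • σ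
    let vκ : R3 := κ • v' + (1 - κ) • v
    let vι : R3 := ι • vs' + (1 - ι) • vs
    let a : ℝ := κ + ι
    let t : ℝ := inner ℝ (‖v - vs‖⁻¹ • (v - vs)) σ
    (‖vκ - vι‖ ^ 2 = ‖v - vs‖ ^ 2 * ((1 + t) / 2 + (1 - a) ^ 2 * ((1 - t) / 2))) ∧
    (0 ≤ t → (2⁻¹ : ℝ) * ‖v - vs‖ ^ 2 ≤ ‖vκ - vι‖ ^ 2 ∧ ‖vκ - vι‖ ^ 2 ≤ ‖v - vs‖ ^ 2) ∧
    (∀ a' θ : ℝ, a' ∈ Set.Icc (0:ℝ) 2 → θ ∈ Set.Icc (0:ℝ) (Real.pi / 2) →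
      1 ≤ (Real.cos (θ / 2) ^ 2 + (1 - a') ^ 2 * Real.sin (θ / 2) ^ 2) ^ (-(2⁻¹ : ℝ)) ∧
      (Real.cos (θ / 2) ^ 2 + (1 - a') ^ 2 * Real.sin (θ / 2) ^ 2) ^ (-(2⁻¹ : ℝ))
        ≤ Real.sqrt 2) := by
  intro v' vs' vκ vι a t
  have hu : (0:ℝ) < ‖v - vs‖ := by
    rw [norm_pos_iff]; exact sub_ne_zero_of_ne hne
  have hit : (inner ℝ (v - vs) σ : ℝ) = t * ‖v - vs‖ := by
    show _ = (inner ℝ (‖v - vs‖⁻¹ • (v - vs)) σ : ℝ) * ‖v - vs‖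
    rw [real_inner_smul_left]
    field_simp
  have hveq : vκ - vι = (1 - a / 2) • (v - vs) + (a * (‖v - vs‖ / 2)) • σ := by
    show κ • ((2⁻¹ : ℝ) • (v + vs) + (‖v - vs‖ / 2) • σ) + (1 - κ) • v
        - (ι • ((2⁻¹ : ℝ) • (v + vs) - (‖v - vs‖ / 2) • σ) + (1 - ι) • vs)
        = (1 - (κ + ι) / 2) • (v - vs) + ((κ + ι) * (‖v - vs‖ / 2)) • σ
    module
  have key : ‖vκ - vι‖ ^ 2 = ‖v - vs‖ ^ 2 * ((1 + t) / 2 + (1 - a) ^ 2 * ((1 - t) / 2)) := by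
    rw [hveq, norm_add_sq_real, norm_smul, norm_smul, real_inner_smul_left,
      real_inner_smul_right, hit, hσ, Real.norm_eq_abs, Real.norm_eq_abs,
      mul_pow, mul_pow, sq_abs, sq_abs]
    show (1 - (κ + ι) / 2) ^ 2 * ‖v - vs‖ ^ 2
        + 2 * ((1 - (κ + ι) / 2) * ((κ + ι) * (‖v - vs‖ / 2) * (t * ‖v - vs‖)))
        + ((κ + ι) * (‖v - vs‖ / 2)) ^ 2 * 1 ^ 2
        = ‖v - vs‖ ^ 2 * ((1 + t) / 2 + (1 - (κ + ι)) ^ 2 * ((1 - t) / 2))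
    ring
  have ht1 : t ≤ 1 := by
    have := abs_real_inner_le_norm (‖v - vs‖⁻¹ • (v - vs)) σ
    rw [norm_smul, norm_inv, norm_norm, inv_mul_cancel₀ hu.ne', hσ] at this
    have := abs_le.mp (by simpa using this)
    exact this.2
  obtain ⟨hκ0, hκ1⟩ := hκ
  obtain ⟨hι0, hι1⟩ := hι
  refine ⟨key, fun ht0 => ?_, fun a' θ ha hθ => psi_bounds a' θ ha hθ⟩
  have ha1 : (1 - a) ^ 2 ≤ 1 := by
    show (1 - (κ + ι)) ^ 2 ≤ 1
    nlinarith
  have hn2 : (0:ℝ) < ‖v - vs‖ ^ 2 := by positivity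
  obtain ⟨hL, hR⟩ := bound_aux (‖v - vs‖ ^ 2) t ((1 - a) ^ 2) hn2 ht0 ht1
    (sq_nonneg _) ha1
  exact ⟨key ▸ hL, key ▸ hR⟩

end
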